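/- For every x, y, z ∈ (−π/6, π/2) satisfying x + y + z + min{x, y, z} ≥ 0, one has tan((x + y + z)/3) ≤ (tan x + tan y + tan z)/3. -/

import Mathlib

open Real

private lemma cos_pos_aux {t : ℝ} (h1 : -(π/2) < t) (h2 : t < π/2) : 0 < Real.cos t :=
  Real.cos_pos_of_mem_Ioo ⟨by simpa using h1, h2⟩

/-- secant squared comparison: if `|a| ≤ b < π/2` then `1/cos a ^ 2 ≤ 1/cos b ^ 2`. -/
private lemma sec_sq_mono {a b : ℝ} (hab : |a| ≤ b) (hb : b < π/2) :
    1 / Real.cos a ^ 2 ≤ 1 / Real.cos b ^ 2 := by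
  have hpi := Real.pi_pos
  have hb0 : 0 ≤ b := le_trans (abs_nonneg a) hab
  have hcb : 0 < Real.cos b := cos_pos_aux (by linarith) hb
  have haa : |a| < π/2 := lt_of_le_of_lt hab hb
  have hca : 0 < Real.cos a := by
    rcases abs_lt.mp haa with ⟨h1, h2⟩
    exact cos_pos_aux (by linarith) h2
  have h1 : Real.cos b ≤ Real.cos a := by
    rw [← Real.cos_abs a]
    exact Real.cos_le_cos_of_nonneg_of_le_pi (abs_nonneg a) (by linarith) hab
  have h2 : Real.cos b ^ 2 ≤ Real.cos a ^ 2 := by nlinarith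
  exact one_div_le_one_div_of_le (by positivity) h2

/-- Shift lemma: if `y ≤ s ≤ z` (with suitable bounds) and `0 ≤ 2y + z - s`, then
`tan s + tan (y + z - s) ≤ tan y + tan z`. -/
private lemma L4 (y z s : ℝ) (hyL : -(π/2) < y) (hys : y ≤ s) (hsz : s ≤ z) (hzP : z < π/2)
    (hs0 : 0 ≤ s) (hw : 2*s ≤ y + z) (hcond : 0 ≤ 2*y + z - s) :
    Real.tan s + Real.tan (y + z - s) ≤ Real.tan y + Real.tan z := by
  have hpi := Real.pi_pos
  have hsP : s < π/2 := lt_of_le_of_lt hsz hzP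
  have hd : ∀ t ∈ Set.Icc y s,
      HasDerivAt (fun u : ℝ => Real.tan (u + (z - s)) - Real.tan u)
        (1 / Real.cos (t + (z - s)) ^ 2 * 1 - 1 / Real.cos t ^ 2) t := by
    intro t ht
    rcases ht with ⟨ht1, ht2⟩
    have hb1 : |t| ≤ t + (z - s) := by
      rw [abs_le']
      constructor
      · linarith
      · linarith
    have hb2 : t + (z - s) < π/2 := by linarith
    have hc1 : Real.cos (t + (z - s)) ≠ 0 := by
      refine ne_of_gt (cos_pos_aux ?_ hb2)
      have := abs_nonneg t
      linarith
    have hc2 : Real.cos t ≠ 0 := ne_of_gt (cos_pos_aux (by linarith) (by linarith))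
    have h1 : HasDerivAt (fun u : ℝ => Real.tan (u + (z - s)))
        (1 / Real.cos (t + (z - s)) ^ 2 * 1) t := by
      have := (Real.hasDerivAt_tan hc1).comp t ((hasDerivAt_id t).add_const (z - s)); exact this
    exact h1.sub (Real.hasDerivAt_tan hc2)
  have mono : MonotoneOn (fun u : ℝ => Real.tan (u + (z - s)) - Real.tan u) (Set.Icc y s) := by
    apply monotoneOn_of_deriv_nonneg (convex_Icc y s)
    · intro t ht
      exact (hd t ht).continuousAt.continuousWithinAt
    · intro t ht
      rw [interior_Icc] at ht
      exact (hd t (Set.Ioo_subset_Icc_self ht)).differentiableAt.differentiableWithinAt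
    · intro t ht
      rw [interior_Icc] at ht
      have ht' := Set.Ioo_subset_Icc_self ht
      rw [(hd t ht').deriv]
      rcases ht' with ⟨ht1, ht2⟩
      have hb1 : |t| ≤ t + (z - s) := by
        rw [abs_le']
        constructor
        · linarith
        · linarith
      have := sec_sq_mono hb1 (by linarith : t + (z - s) < π/2)
      linarith
  have h := mono (Set.left_mem_Icc.mpr hys) (Set.right_mem_Icc.mpr hys) hys
  simp only at h
  have e1 : y + (z - s) = y + z - s := by ring
  have e2 : s + (z - s) = z := by ring
  rw [e1, e2] at h
  linarith

/-- If `T ≤ s`, `0 ≤ s` and bounds hold, then `2 tan s ≤ tan T + tan (2s - T)`. -/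
private lemma L3 (T s : ℝ) (hT : -(π/2) < T) (hTs : T ≤ s) (hs0 : 0 ≤ s)
    (h2s : 2*s - T < π/2) :
    2 * Real.tan s ≤ Real.tan T + Real.tan (2*s - T) := by
  have hpi := Real.pi_pos
  have hsP : s < π/2 := by linarith
  have hd : ∀ t ∈ Set.Icc T s,
      HasDerivAt (fun u : ℝ => Real.tan u + Real.tan (2*s - u))
        (1 / Real.cos t ^ 2 + 1 / Real.cos (2*s - t) ^ 2 * (-1)) t := by
    intro t ht
    rcases ht with ⟨ht1, ht2⟩
    have hc1 : Real.cos t ≠ 0 := ne_of_gt (cos_pos_aux (by linarith) (by linarith))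
    have hc2 : Real.cos (2*s - t) ≠ 0 :=
      ne_of_gt (cos_pos_aux (by linarith) (by linarith))
    have h1 : HasDerivAt (fun u : ℝ => Real.tan (2*s - u))
        (1 / Real.cos (2*s - t) ^ 2 * (-1)) t := by
      have hin : HasDerivAt (fun u : ℝ => 2*s - u) (-1) t := by
        simpa using (hasDerivAt_id t).const_sub (2*s)
      exact (Real.hasDerivAt_tan hc2).comp t hin
    exact (Real.hasDerivAt_tan hc1).add h1
  have anti : AntitoneOn (fun u : ℝ => Real.tan u + Real.tan (2*s - u)) (Set.Icc T s) := by
    apply antitoneOn_of_deriv_nonpos (convex_Icc T s)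
    · intro t ht
      exact (hd t ht).continuousAt.continuousWithinAt
    · intro t ht
      rw [interior_Icc] at ht
      exact (hd t (Set.Ioo_subset_Icc_self ht)).differentiableAt.differentiableWithinAt
    · intro t ht
      rw [interior_Icc] at ht
      have ht' := Set.Ioo_subset_Icc_self ht
      rw [(hd t ht').deriv]
      rcases ht' with ⟨ht1, ht2⟩
      have hb1 : |t| ≤ 2*s - t := by
        rw [abs_le']
        constructor
        · linarith
        · linarith
      have := sec_sq_mono hb1 (by linarith : 2*s - t < π/2)
      linarith
  have h := anti (Set.left_mem_Icc.mpr hTs) (Set.right_mem_Icc.mpr hTs) hTs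
  simp only at h
  have e1 : 2*s - s = s := by ring
  rw [e1] at h
  linarith

/-- If `0 ≤ s ≤ v ≤ 3s` (with bounds), then `3 tan s ≤ tan (3s - 2v) + 2 tan v`. -/
private lemma L2 (s v : ℝ) (hs0 : 0 ≤ s) (hsv : s ≤ v) (hv3 : v ≤ 3*s) (hvP : v < π/2)
    (hxL : -(π/2) < 3*s - 2*v) :
    3 * Real.tan s ≤ Real.tan (3*s - 2*v) + 2 * Real.tan v := by
  have hpi := Real.pi_pos
  have hsP : s < π/2 := lt_of_le_of_lt hsv hvP
  have hd : ∀ t ∈ Set.Icc s v,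
      HasDerivAt (fun u : ℝ => Real.tan (3*s - 2*u) + 2 * Real.tan u)
        (1 / Real.cos (3*s - 2*t) ^ 2 * (-2) + 2 * (1 / Real.cos t ^ 2)) t := by
    intro t ht
    rcases ht with ⟨ht1, ht2⟩
    have hc1 : Real.cos (3*s - 2*t) ≠ 0 :=
      ne_of_gt (cos_pos_aux (by linarith) (by linarith))
    have hc2 : Real.cos t ≠ 0 := ne_of_gt (cos_pos_aux (by linarith) (by linarith))
    have hin : HasDerivAt (fun u : ℝ => 3*s - 2*u) (-2) t := by
      have h2u : HasDerivAt (fun u : ℝ => 2*u) 2 t := by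
        simpa using (hasDerivAt_id t).const_mul 2
      simpa using h2u.const_sub (3*s)
    have h1 : HasDerivAt (fun u : ℝ => Real.tan (3*s - 2*u))
        (1 / Real.cos (3*s - 2*t) ^ 2 * (-2)) t := by
      have := (Real.hasDerivAt_tan hc1).comp t hin; exact this
    exact h1.add ((Real.hasDerivAt_tan hc2).const_mul 2)
  have mono : MonotoneOn (fun u : ℝ => Real.tan (3*s - 2*u) + 2 * Real.tan u)
      (Set.Icc s v) := by
    apply monotoneOn_of_deriv_nonneg (convex_Icc s v)
    · intro t ht
      exact (hd t ht).continuousAt.continuousWithinAt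
    · intro t ht
      rw [interior_Icc] at ht
      exact (hd t (Set.Ioo_subset_Icc_self ht)).differentiableAt.differentiableWithinAt
    · intro t ht
      rw [interior_Icc] at ht
      have ht' := Set.Ioo_subset_Icc_self ht
      rw [(hd t ht').deriv]
      rcases ht' with ⟨ht1, ht2⟩
      have hb1 : |3*s - 2*t| ≤ t := by
        rw [abs_le']
        constructor
        · linarith
        · linarith
      have := sec_sq_mono hb1 (by linarith : t < π/2)
      linarith
  have h := mono (Set.left_mem_Icc.mpr hsv) (Set.right_mem_Icc.mpr hsv) hsv
  simp only at h
  have e1 : 3*s - 2*s = s := by ring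
  rw [e1] at h
  linarith

private lemma key (x y z : ℝ)
    (hx : x ∈ Set.Ioo (-(π / 6)) (π / 2))
    (hy : y ∈ Set.Ioo (-(π / 6)) (π / 2))
    (hz : z ∈ Set.Ioo (-(π / 6)) (π / 2))
    (hxy : x ≤ y) (hyz : y ≤ z) (hcond : 0 ≤ 2*x + y + z) :
    Real.tan ((x + y + z) / 3) ≤ (Real.tan x + Real.tan y + Real.tan z) / 3 := by
  have hpi := Real.pi_pos
  obtain ⟨hx1, hx2⟩ := hx
  obtain ⟨hy1, hy2⟩ := hy
  obtain ⟨hz1, hz2⟩ := hz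
  set s := (x + y + z) / 3 with hs
  have hxs : x ≤ s := by rw [hs]; linarith
  have hsz : s ≤ z := by rw [hs]; linarith
  have hs0 : 0 ≤ s := by rw [hs]; linarith [hs ▸ hxs]
  have hsP : s < π/2 := by rw [hs]; linarith
  have hxL : -(π/2) < x := by linarith
  have hyL : -(π/2) < y := by linarith
  rcases le_total y s with hys | hsy
  · -- Case y ≤ s
    have hcond2 : 0 ≤ 2*y + z - s := by
      rcases le_total 0 y with h0 | h0
      · rw [hs]; linarith
      · rw [hs]; linarith
    have h1 : Real.tan s + Real.tan (y + z - s) ≤ Real.tan y + Real.tan z :=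
      L4 y z s hyL hys hsz hz2 hs0 (by rw [hs]; linarith) hcond2
    have h2 : 2 * Real.tan s ≤ Real.tan x + Real.tan (2*s - x) :=
      L3 x s hxL hxs hs0 (by rw [hs]; linarith)
    have e : y + z - s = 2*s - x := by rw [hs]; ring
    rw [e] at h1
    linarith
  · -- Case s ≤ y
    set v := (y + z) / 2 with hv
    have hsv : s ≤ v := by rw [hs, hv]; linarith
    have hv3 : v ≤ 3*s := by rw [hs, hv]; linarith
    have hvP : v < π/2 := by rw [hv]; linarith
    have h1 : Real.tan v + Real.tan (y + z - v) ≤ Real.tan y + Real.tan z :=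
      L4 y z v hyL (by rw [hv]; linarith) (by rw [hv]; linarith) hz2
        (by linarith) (by rw [hv]; linarith) (by rw [hv]; linarith)
    have ev : y + z - v = v := by rw [hv]; ring
    rw [ev] at h1
    have h2 : 3 * Real.tan s ≤ Real.tan (3*s - 2*v) + 2 * Real.tan v :=
      L2 s v hs0 hsv hv3 hvP (by rw [hs, hv]; linarith)
    have ex : 3*s - 2*v = x := by rw [hs, hv]; ring
    rw [ex] at h2
    linarith

theorem tan_jensen_three
    (x y z : ℝ)
    (hx : x ∈ Set.Ioo (-(π / 6)) (π / 2))
    (hy : y ∈ Set.Ioo (-(π / 6)) (π / 2))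
    (hz : z ∈ Set.Ioo (-(π / 6)) (π / 2))
    (hmin : 0 ≤ x + y + z + min x (min y z)) :
    tan ((x + y + z) / 3) ≤ (tan x + tan y + tan z) / 3 := by
  rcases le_total x y with h1 | h1 <;> rcases le_total y z with h2 | h2 <;>
    rcases le_total x z with h3 | h3
  · -- x ≤ y ≤ z
    rw [min_eq_left h2, min_eq_left h1] at hmin
    exact key x y z hx hy hz h1 h2 (by linarith)
  · -- x ≤ y, y ≤ z, z ≤ x : degenerate, still x ≤ y ≤ z
    rw [min_eq_left h2, min_eq_left h1] at hmin
    exact key x y z hx hy hz h1 h2 (by linarith)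
  · -- x ≤ y, z ≤ y, x ≤ z : order x z y
    rw [min_eq_right h2, min_eq_left h3] at hmin
    have H := key x z y hx hz hy h3 h2 (by linarith)
    rw [show x + z + y = x + y + z by ring] at H
    linarith
  · -- x ≤ y, z ≤ y, z ≤ x : order z x y
    rw [min_eq_right h2, min_eq_right h3] at hmin
    have H := key z x y hz hx hy h3 h1 (by linarith)
    rw [show z + x + y = x + y + z by ring] at H
    linarith
  · -- y ≤ x, y ≤ z, x ≤ z : order y x z
    rw [min_eq_left h2, min_eq_right h1] at hmin
    have H := key y x z hy hx hz h1 h3 (by linarith)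
    rw [show y + x + z = x + y + z by ring] at H
    linarith
  · -- y ≤ x, y ≤ z, z ≤ x : order y z x
    rw [min_eq_left h2, min_eq_right h1] at hmin
    have H := key y z x hy hz hx h2 h3 (by linarith)
    rw [show y + z + x = x + y + z by ring] at H
    linarith
  · -- y ≤ x, z ≤ y, x ≤ z : degenerate, order z y x
    rw [min_eq_right h2, min_eq_right (le_trans h2 h1)] at hmin
    have H := key z y x hz hy hx h2 h1 (by linarith)
    rw [show z + y + x = x + y + z by ring] at H
    linarith
  · -- y ≤ x, z ≤ y, z ≤ x : order z y x
    rw [min_eq_right h2, min_eq_right h3] at hmin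
    have H := key z y x hz hy hx h2 h1 (by linarith)
    rw [show z + y + x = x + y + z by ring] at H
    linarith
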